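/- arXiv:math-ph/0602038 — 6 statements merged into one kernel-verified Lean document; each statement's English description precedes it below -/
import Mathlib

section
/- Let X = (X_1, …, X_k) be a SOPDE on ℝ^k × ℝ^n × ℝ^{nk} with coefficient functions (X_A)^i_B, and suppose X is integrable, i.e. through every point of ℝ^k × ℝ^n × ℝ^{nk} there passes an integral section of X. Then the coefficients are symmetric: (X_A)^i_B = (X_B)^i_A at every point, for all i, A, B. -/
noncomputable section

/-- The phase space `ℝ^k × ℝ^n × ℝ^{nk}` with coordinates `(t^A, q^i, v^i_A)`. -/
abbrev Phase (k n : ℕ) : Type :=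
  (Fin k → ℝ) × (Fin n → ℝ) × (Fin n → Fin k → ℝ)

/-- Partial derivative `∂f/∂t^A` of a function on `ℝ^k`. -/
def pdR {k : ℕ} (A : Fin k) (f : (Fin k → ℝ) → ℝ) (t : Fin k → ℝ) : ℝ :=
  fderiv ℝ f t (Pi.single A 1)

/-- `ψ` is an integral section of the `k`-vector field `X = (X_1, …, X_k)`:
`∂ψ/∂t^A(t) = X_A(ψ(t))`. -/
def IsIntegralSection {k n : ℕ} (X : Fin k → Phase k n → Phase k n)
    (ψ : (Fin k → ℝ) → Phase k n) : Prop :=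
  ∀ t A, fderiv ℝ ψ t (Pi.single A 1) = X A (ψ t)

/-- `X` is a second order partial differential equation (SOPDE):
`(X_A)^B = δ^B_A` and `(X_A)^i = v^i_A`. -/
def IsSOPDE {k n : ℕ} (X : Fin k → Phase k n → Phase k n) : Prop :=
  ∀ A p, (X A p).1 = Pi.single A 1 ∧ ∀ i, (X A p).2.1 i = p.2.2 i A

/-- The first prolongation `φ^[1](t) = (t, φ^i(t), ∂φ^i/∂t^A(t))` of `φ : ℝ^k → ℝ^n`. -/
def prolong {k n : ℕ} (φ : (Fin k → ℝ) → Fin n → ℝ) (t : Fin k → ℝ) : Phase k n :=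
  (t, φ t, fun i A => pdR A (fun s => φ s i) t)

/-- if `X` is an integrable SOPDE, then its coefficients are symmetric:
`(X_A)^i_B = (X_B)^i_A` at every point. -/
theorem stmt3 {k n : ℕ} (X : Fin k → Phase k n → Phase k n)
    (hX : ∀ A, ContDiff ℝ (⊤ : ℕ∞) (X A)) (hS : IsSOPDE X)
    (h : ∀ m : Phase k n, ∃ (ψ : (Fin k → ℝ) → Phase k n) (t₀ : Fin k → ℝ),
        ContDiff ℝ (⊤ : ℕ∞) ψ ∧ IsIntegralSection X ψ ∧ ψ t₀ = m) :
    ∀ (p : Phase k n) (i : Fin n) (A B : Fin k), (X A p).2.2 i B = (X B p).2.2 i A := by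
  intro p i A B
  obtain ⟨ψ, t₀, hψ, hint, hpt⟩ := h p
  have hψd : Differentiable ℝ ψ := hψ.differentiable (by simp)
  set e : Fin k → (Fin k → ℝ) := fun C => Pi.single C 1 with he
  -- projections
  set L₂ : Phase k n →L[ℝ] (Fin n → ℝ) :=
    (ContinuousLinearMap.fst ℝ (Fin n → ℝ) (Fin n → Fin k → ℝ)).comp
      (ContinuousLinearMap.snd ℝ (Fin k → ℝ) ((Fin n → ℝ) × (Fin n → Fin k → ℝ))) with hL₂
  set L₃ : Phase k n →L[ℝ] (Fin n → Fin k → ℝ) :=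
    (ContinuousLinearMap.snd ℝ (Fin n → ℝ) (Fin n → Fin k → ℝ)).comp
      (ContinuousLinearMap.snd ℝ (Fin k → ℝ) ((Fin n → ℝ) × (Fin n → Fin k → ℝ))) with hL₃
  set f : (Fin k → ℝ) → (Fin n → ℝ) := fun t => L₂ (ψ t) with hfdef
  set g : (Fin k → ℝ) → (Fin n → Fin k → ℝ) := fun t => L₃ (ψ t) with hgdef
  have hf : ContDiff ℝ (⊤ : ℕ∞) f := L₂.contDiff.comp hψ
  have hg : ContDiff ℝ (⊤ : ℕ∞) g := L₃.contDiff.comp hψ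
  -- step A
  have hAf : ∀ t C, fderiv ℝ f t (e C) = fun j => (ψ t).2.2 j C := by
    intro t C
    have h1 : HasFDerivAt f (L₂.comp (fderiv ℝ ψ t)) t :=
      L₂.hasFDerivAt.comp t (hψd t).hasFDerivAt
    rw [h1.fderiv]
    simp only [ContinuousLinearMap.comp_apply, he, hint t C]
    funext j
    exact (hS C (ψ t)).2 j
  have hBg : ∀ t C, fderiv ℝ g t (e C) = (X C (ψ t)).2.2 := by
    intro t C
    have h1 : HasFDerivAt g (L₃.comp (fderiv ℝ ψ t)) t :=
      L₃.hasFDerivAt.comp t (hψd t).hasFDerivAt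
    rw [h1.fderiv]
    simp only [ContinuousLinearMap.comp_apply, he, hint t C]
    rfl
  -- second derivative
  set f' : (Fin k → ℝ) → (Fin k → ℝ) →L[ℝ] (Fin n → ℝ) := fderiv ℝ f with hf'def
  have hf' : ContDiff ℝ (⊤ : ℕ∞) f' := hf.fderiv_right (by simp)
  have hf'd : Differentiable ℝ f' := hf'.differentiable (by simp)
  set f'' : (Fin k → ℝ) →L[ℝ] (Fin k → ℝ) →L[ℝ] (Fin n → ℝ) := fderiv ℝ f' t₀ with hf''def
  have hsymm : ∀ v w, f'' v w = f'' w v :=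
    fun v w => second_derivative_symmetric
      (fun y => (hf.differentiable (by simp) y).hasFDerivAt) (hf'd t₀).hasFDerivAt v w
  -- step D : f'' (e C) (e D) j = (X C p).2.2 j D
  have hD : ∀ (C D : Fin k) (j : Fin n), f'' (e C) (e D) j = (X C p).2.2 j D := by
    intro C D j
    set E' : ((Fin k → ℝ) →L[ℝ] (Fin n → ℝ)) →L[ℝ] ℝ :=
      (ContinuousLinearMap.proj j).comp
        (ContinuousLinearMap.apply ℝ (Fin n → ℝ) (e D)) with hE'
    set E'' : (Fin n → Fin k → ℝ) →L[ℝ] ℝ :=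
      (ContinuousLinearMap.proj (R := ℝ) (φ := fun _ : Fin k => ℝ) D).comp (ContinuousLinearMap.proj (R := ℝ) (φ := fun _ : Fin n => Fin k → ℝ) j) with hE''
    have heq : (fun t => E' (f' t)) = fun t => E'' (g t) := by
      funext t
      have := hAf t D
      simp only [hE', hE'', ContinuousLinearMap.comp_apply,
        ContinuousLinearMap.apply_apply, ContinuousLinearMap.proj_apply]
      rw [hf'def]
      rw [this]
      rfl
    have h1 : fderiv ℝ (fun t => E' (f' t)) t₀ (e C) = f'' (e C) (e D) j := by
      have h3 := (E'.hasFDerivAt.comp t₀ (hf'd t₀).hasFDerivAt).fderiv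
      simp only [Function.comp_def] at h3
      rw [h3]
      simp [hE', hf''def]
    have h2 : fderiv ℝ (fun t => E'' (g t)) t₀ (e C) = (X C p).2.2 j D := by
      have h3 := (E''.hasFDerivAt.comp t₀ (hg.differentiable (by simp) t₀).hasFDerivAt).fderiv
      simp only [Function.comp_def] at h3
      rw [h3]
      simp only [ContinuousLinearMap.comp_apply]
      rw [hBg t₀ C, hpt]
      rfl
    rw [← h1, heq, h2]
  have := hsymm (e A) (e B)
  have h1 := hD A B i
  have h2 := hD B A i
  rw [← h1, ← h2, this]
end
end

section
/- Let L : ℝ^k × ℝ^n × ℝ^{nk} → ℝ be a smooth Lagrangian and X = (X_1, …, X_k) a k-vector field with (X_A)^B = δ^B_A whose coefficients satisfy at every point, for each i: Σ_{B,j} ∂²L/∂q^j∂v^i_B · (v^j_B − (X_B)^j) + Σ_B ∂²L/∂t^B∂v^i_B + Σ_{B,j} v^j_B · ∂²L/∂q^j∂v^i_B + Σ_{B,C,l} (X_B)^l_C · ∂²L/∂v^l_C∂v^i_B = ∂L/∂q^i. If φ : ℝ^k → ℝ^n is a smooth map whose first prolongation φ^[1] is an integral section of X, then φ solves the Euler–Lagrange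 field equations for L. -/
noncomputable section

/-- Partial derivative `∂f/∂t^A` on phase space. -/
def pdt {k n : ℕ} (A : Fin k) (f : Phase k n → ℝ) (p : Phase k n) : ℝ :=
  fderiv ℝ f p (Pi.single A 1, 0, 0)

/-- Partial derivative `∂f/∂q^i` on phase space. -/
def pdq {k n : ℕ} (i : Fin n) (f : Phase k n → ℝ) (p : Phase k n) : ℝ :=
  fderiv ℝ f p (0, Pi.single i 1, 0)

/-- Partial derivative `∂f/∂v^i_A` on phase space. -/
def pdv {k n : ℕ} (i : Fin n) (A : Fin k) (f : Phase k n → ℝ) (p : Phase k n) : ℝ :=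
  fderiv ℝ f p (0, 0, Pi.single i (Pi.single A 1))

/-- The Hessian of `L` with respect to the velocities, as an `nk × nk` matrix. -/
def hessV {k n : ℕ} (L : Phase k n → ℝ) (p : Phase k n) :
    Matrix (Fin n × Fin k) (Fin n × Fin k) ℝ :=
  Matrix.of fun a b => pdv a.1 a.2 (pdv b.1 b.2 L) p

/-- `L` is a regular Lagrangian: its velocity Hessian is invertible at every point. -/
def Regular {k n : ℕ} (L : Phase k n → ℝ) : Prop :=
  ∀ p, IsUnit (hessV L p)

section Aux

variable {k n : ℕ}

lemma smooth_fd {E F : Type*} [NormedAddCommGroup E] [NormedSpace ℝ E]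
    [NormedAddCommGroup F] [NormedSpace ℝ F]
    {f : E → F} (hf : ContDiff ℝ (⊤ : ℕ∞) f) (w : E) :
    ContDiff ℝ (⊤ : ℕ∞) (fun x => fderiv ℝ f x w) :=
  (hf.fderiv_right (m := (⊤ : ℕ∞)) (by simp)).clm_apply contDiff_const

lemma clm_fderiv_comp {E F G : Type*} [NormedAddCommGroup E] [NormedSpace ℝ E]
    [NormedAddCommGroup F] [NormedSpace ℝ F] [NormedAddCommGroup G] [NormedSpace ℝ G]
    (π : F →L[ℝ] G) {f : E → F} {x : E} (hf : DifferentiableAt ℝ f x) (w : E) :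
    fderiv ℝ (fun s => π (f s)) x w = π (fderiv ℝ f x w) := by
  rw [show (fun s => π (f s)) = π ∘ f from rfl, fderiv_comp x π.differentiableAt hf,
    π.fderiv]
  rfl

/-- decomposition of a phase-space tangent vector -/
lemma vec_decomp (a : Fin k → ℝ) (b : Fin n → ℝ) (c : Fin n → Fin k → ℝ) :
    ((a, b, c) : Phase k n)
      = ((a, 0, 0) : Phase k n)
        + (∑ j, b j • ((0, Pi.single j 1, 0) : Phase k n))
        + ∑ l, ∑ C, c l C • ((0, 0, Pi.single l (Pi.single C 1)) : Phase k n) := by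
  refine Prod.ext ?_ (Prod.ext ?_ ?_)
  · simp [Prod.fst_sum]
  · funext m
    simp [Prod.fst_sum, Prod.snd_sum, Finset.sum_apply, Pi.single_apply]
  · funext m B
    simp [Prod.snd_sum, Finset.sum_apply, Pi.single_apply]

lemma fd_expand (g : Phase k n → ℝ) {p : Phase k n} (hg : DifferentiableAt ℝ g p)
    (a : Fin k → ℝ) (b : Fin n → ℝ) (c : Fin n → Fin k → ℝ) :
    fderiv ℝ g p (a, b, c) =
      fderiv ℝ g p (a, 0, 0) + (∑ j, b j * fderiv ℝ g p (0, Pi.single j 1, 0))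
      + ∑ l, ∑ C, c l C * fderiv ℝ g p (0, 0, Pi.single l (Pi.single C 1)) := by
  rw [vec_decomp a b c]
  simp only [map_add, map_sum, map_smul, smul_eq_mul]

end Aux


/-- if the `k`-vector field `X` with `(X_A)^B = δ^B_A` satisfies the
Lagrangian component equation (\ref{lagloc22}) everywhere, then any map `φ` whose first
prolongation is an integral section of `X` solves the Euler–Lagrange field equations. -/
theorem stmt6 {k n : ℕ} (L : Phase k n → ℝ) (hL : ContDiff ℝ (⊤ : ℕ∞) L)
    (X : Fin k → Phase k n → Phase k n) (hX : ∀ A, ContDiff ℝ (⊤ : ℕ∞) (X A))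
    (h1 : ∀ A p, (X A p).1 = Pi.single A 1)
    (h2 : ∀ p (i : Fin n),
        (∑ B, ∑ j, pdq j (pdv i B L) p * (p.2.2 j B - (X B p).2.1 j))
        + (∑ B, pdt B (pdv i B L) p)
        + (∑ B, ∑ j, p.2.2 j B * pdq j (pdv i B L) p)
        + (∑ B, ∑ C, ∑ l, (X B p).2.2 l C * pdv l C (pdv i B L) p)
        = pdq i L p)
    (φ : (Fin k → ℝ) → Fin n → ℝ) (hφ : ContDiff ℝ (⊤ : ℕ∞) φ)
    (hint : IsIntegralSection X (prolong φ)) :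
    ∀ t (i : Fin n),
      ∑ A, pdR A (fun s => pdv i A L (prolong φ s)) t = pdq i L (prolong φ t) := by
  intro t i
  set p := prolong φ t with hp
  -- smoothness facts
  have hφj : ∀ j, ContDiff ℝ (⊤ : ℕ∞) (fun s => φ s j) := fun j =>
    (contDiff_pi.mp hφ) j
  have hpdv : ∀ (l : Fin n) (C : Fin k), ContDiff ℝ (⊤ : ℕ∞) (pdv l C L) := fun l C =>
    smooth_fd hL _
  have hF : ContDiff ℝ (⊤ : ℕ∞)
      (fun s => fun (l : Fin n) (C : Fin k) => pdR C (fun u => φ u l) s) :=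
    contDiff_pi.mpr fun l => contDiff_pi.mpr fun C => smooth_fd (hφj l) _
  have hprol : ContDiff ℝ (⊤ : ℕ∞) (prolong φ) :=
    contDiff_id.prodMk (hφ.prodMk hF)
  have hprolD : DifferentiableAt ℝ (prolong φ) t :=
    (hprol.differentiable (by simp)).differentiableAt
  -- integral section fact
  have hXA : ∀ A, X A p = fderiv ℝ (prolong φ) t (Pi.single A 1) := fun A => (hint t A).symm
  -- component identification: (X_A)^j = v^j_A along the prolongation
  have hv : ∀ (A : Fin k) (j : Fin n), (X A p).2.1 j = p.2.2 j A := by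
    intro A j
    have := clm_fderiv_comp
      ((ContinuousLinearMap.proj j).comp
        ((ContinuousLinearMap.fst ℝ (Fin n → ℝ) (Fin n → Fin k → ℝ)).comp
          (ContinuousLinearMap.snd ℝ (Fin k → ℝ) ((Fin n → ℝ) × (Fin n → Fin k → ℝ)))))
      hprolD (Pi.single A 1)
    simp only [ContinuousLinearMap.coe_comp', Function.comp_apply,
      ContinuousLinearMap.coe_snd', ContinuousLinearMap.coe_fst',
      ContinuousLinearMap.proj_apply] at this
    rw [hXA A, ← this]
    rfl
  -- chain rule and expansion
  have hchain : ∀ A : Fin k, pdR A (fun s => pdv i A L (prolong φ s)) t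
      = pdt A (pdv i A L) p
        + (∑ j, (X A p).2.1 j * pdq j (pdv i A L) p)
        + ∑ l, ∑ C, (X A p).2.2 l C * pdv l C (pdv i A L) p := by
    intro A
    have hgD : DifferentiableAt ℝ (pdv i A L) p :=
      ((hpdv i A).differentiable (by simp)).differentiableAt
    have hcomp : pdR A (fun s => pdv i A L (prolong φ s)) t
        = fderiv ℝ (pdv i A L) p (X A p) := by
      unfold pdR
      rw [show (fun s => pdv i A L (prolong φ s)) = (pdv i A L) ∘ prolong φ from rfl,
        fderiv_comp t hgD hprolD]
      simp only [ContinuousLinearMap.coe_comp', Function.comp_apply]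
      rw [hint t A]
    rw [hcomp, show X A p = ((X A p).1, (X A p).2.1, (X A p).2.2) from rfl, h1 A p,
      fd_expand _ hgD]
    rfl
  rw [Finset.sum_congr rfl fun A _ => hchain A]
  have h := h2 p i
  simp only [hv, sub_self, mul_zero, Finset.sum_const_zero, zero_add] at h
  rw [← h]
  rw [Finset.sum_add_distrib, Finset.sum_add_distrib]
  congr 1
  · congr 1
    exact Finset.sum_congr rfl fun A _ => Finset.sum_congr rfl fun j _ => by rw [hv]
  · exact Finset.sum_congr rfl fun A _ => Finset.sum_comm
end
end

section
/- Let L : ℝ^k × ℝ^n × ℝ^{nk} → ℝ be smooth and let Z = (Z_1, …, Z_k) be a k-vector field on the unified space M = ℝ^k × ℝ^n × ℝ^{nk} × ℝ^{nk}, Z_A = (Z_A)^B ∂/∂t^B + (Z_A)^i ∂/∂q^i + (Z_A)^i_B ∂/∂v^i_B + (Z_A)^B_i ∂/∂p^B_i, whose coefficients satisfy at every point of M_L: (Z_A)^B = δ^B_A, (Z_A)^i = v^i_A, and Σ_{A=1}^k (Z_A)^A_i = ∂L/∂q^i. Let ψ : ℝ^k → M be an integral section of Z taking values in M_L, written ψ(t)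 = (ψ^A(t), ψ^i(t), ψ^i_A(t), ψ^A_i(t)), and set ψ_L(t) = (ψ^A(t), ψ^i(t), ψ^i_A(t)). Then there are constants c^A with ψ^A(t) = t^A + c^A, moreover ψ^i_A(t) = ∂ψ^i/∂t^A(t), ψ^A_i(t) = (∂L/∂v^i_A)(ψ_L(t)), and Σ_{A=1}^k ∂/∂t^A[(∂L/∂v^i_A)(ψ_L(t))] = (∂L/∂q^i)(ψ_L(t)) for all i and t. -/
noncomputable section

/-- The unified (Skinner–Rusk) space `M = ℝ^k × ℝ^n × ℝ^{nk} × ℝ^{nk}` with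
coordinates `(t^A, q^i, v^i_A, p^A_i)`. -/
abbrev USpace (k n : ℕ) : Type :=
  (Fin k → ℝ) × (Fin n → ℝ) × (Fin n → Fin k → ℝ) × (Fin n → Fin k → ℝ)

/-- Projection of the unified space onto the Lagrangian phase space. -/
def lagPr {k n : ℕ} (m : USpace k n) : Phase k n := (m.1, m.2.1, m.2.2.1)

/-- The graph `M_L` of the Legendre map: `p^A_i = ∂L/∂v^i_A(t, q, v)`. -/
def MSet {k n : ℕ} (L : Phase k n → ℝ) : Set (USpace k n) :=
  {m | ∀ (i : Fin n) (A : Fin k), m.2.2.2 i A = pdv i A L (lagPr m)}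

/-- `ψ` is an integral section of the `k`-vector field `Z` on the unified space. -/
def IsIntegralSectionU {k n : ℕ} (Z : Fin k → USpace k n → USpace k n)
    (ψ : (Fin k → ℝ) → USpace k n) : Prop :=
  ∀ t A, fderiv ℝ ψ t (Pi.single A 1) = Z A (ψ t)


private lemma clm_comp_fderiv {E F G : Type*} [NormedAddCommGroup E] [NormedSpace ℝ E]
    [NormedAddCommGroup F] [NormedSpace ℝ F] [NormedAddCommGroup G] [NormedSpace ℝ G]
    (e : F →L[ℝ] G) {ψ : E → F} {t : E} (h : DifferentiableAt ℝ ψ t) (v : E) :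
    fderiv ℝ (fun s => e (ψ s)) t v = e (fderiv ℝ ψ t v) := by
  have h1 : HasFDerivAt (fun s => e (ψ s)) ((e).comp (fderiv ℝ ψ t)) t :=
    (e.hasFDerivAt.comp t h.hasFDerivAt)
  rw [h1.fderiv]; rfl

section aux
variable (k n : ℕ)

/-- Evaluation of the `t`-component. -/
def eT (A : Fin k) : USpace k n →L[ℝ] ℝ :=
  (ContinuousLinearMap.proj A).comp
    (ContinuousLinearMap.fst ℝ (Fin k → ℝ) ((Fin n → ℝ) × (Fin n → Fin k → ℝ) × (Fin n → Fin k → ℝ)))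

/-- Evaluation of the `q`-component. -/
def eQ (i : Fin n) : USpace k n →L[ℝ] ℝ :=
  (ContinuousLinearMap.proj i).comp
    ((ContinuousLinearMap.fst ℝ (Fin n → ℝ) ((Fin n → Fin k → ℝ) × (Fin n → Fin k → ℝ))).comp
      (ContinuousLinearMap.snd ℝ (Fin k → ℝ) ((Fin n → ℝ) × (Fin n → Fin k → ℝ) × (Fin n → Fin k → ℝ))))

/-- Evaluation of the `p`-component. -/
def eP (i : Fin n) (A : Fin k) : USpace k n →L[ℝ] ℝ :=
  (ContinuousLinearMap.proj A).comp
    ((ContinuousLinearMap.proj i).comp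
      ((ContinuousLinearMap.snd ℝ (Fin n → Fin k → ℝ) (Fin n → Fin k → ℝ)).comp
        ((ContinuousLinearMap.snd ℝ (Fin n → ℝ) ((Fin n → Fin k → ℝ) × (Fin n → Fin k → ℝ))).comp
          (ContinuousLinearMap.snd ℝ (Fin k → ℝ) ((Fin n → ℝ) × (Fin n → Fin k → ℝ) × (Fin n → Fin k → ℝ))))))

@[simp] lemma eT_apply (A : Fin k) (m : USpace k n) : eT k n A m = m.1 A := rfl
@[simp] lemma eQ_apply (i : Fin n) (m : USpace k n) : eQ k n i m = m.2.1 i := rfl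
@[simp] lemma eP_apply (i : Fin n) (A : Fin k) (m : USpace k n) : eP k n i A m = m.2.2.2 i A := rfl

end aux

/-- integral sections, valued in `M_L`, of a `k`-vector field `Z` on the
unified space whose components satisfy `(Z_A)^B = δ^B_A`, `(Z_A)^i = v^i_A` and
`Σ_A (Z_A)^A_i = ∂L/∂q^i` on `M_L`, yield solutions of the Euler–Lagrange equations. -/
theorem stmt8 {k n : ℕ} (L : Phase k n → ℝ) (hL : ContDiff ℝ (⊤ : ℕ∞) L)
    (Z : Fin k → USpace k n → USpace k n) (hZ : ∀ A, ContDiff ℝ (⊤ : ℕ∞) (Z A))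
    (h1 : ∀ A, ∀ m ∈ MSet L, (Z A m).1 = Pi.single A 1)
    (h2 : ∀ A, ∀ m ∈ MSet L, ∀ i : Fin n, (Z A m).2.1 i = m.2.2.1 i A)
    (h3 : ∀ m ∈ MSet L, ∀ i : Fin n, ∑ A, (Z A m).2.2.2 i A = pdq i L (lagPr m))
    (ψ : (Fin k → ℝ) → USpace k n) (hψ : ContDiff ℝ (⊤ : ℕ∞) ψ)
    (hint : IsIntegralSectionU Z ψ) (hML : ∀ t, ψ t ∈ MSet L) :
    (∃ c : Fin k → ℝ, ∀ t A, (ψ t).1 A = t A + c A) ∧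
    (∀ t (i : Fin n) (A : Fin k),
      (ψ t).2.2.1 i A = pdR A (fun s => (ψ s).2.1 i) t) ∧
    (∀ t (i : Fin n) (A : Fin k),
      (ψ t).2.2.2 i A = pdv i A L (lagPr (ψ t))) ∧
    (∀ t (i : Fin n),
      ∑ A, pdR A (fun s => pdv i A L (lagPr (ψ s))) t = pdq i L (lagPr (ψ t))) :=  by
  have hdiff : Differentiable ℝ ψ := hψ.differentiable (by simp)
  refine ⟨?_, ?_, ?_, ?_⟩
  · -- part 1
    refine ⟨fun A => (ψ 0).1 A - (0 : Fin k → ℝ) A, fun t A => ?_⟩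
    have hconst : ∀ s t : Fin k → ℝ, (ψ s).1 A - s A = (ψ t).1 A - t A := by
      apply is_const_of_fderiv_eq_zero (𝕜 := ℝ)
      · exact (((eT k n A).differentiable).comp hdiff).sub
          (ContinuousLinearMap.proj A : (Fin k → ℝ) →L[ℝ] ℝ).differentiable
      · intro x
        apply ContinuousLinearMap.coe_injective
        apply Module.Basis.ext (Pi.basisFun ℝ (Fin k))
        intro B
        have hda : DifferentiableAt ℝ (fun s : Fin k → ℝ => eT k n A (ψ s)) x :=
          ((eT k n A).differentiable.comp hdiff) x
        have hdb : DifferentiableAt ℝ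
            (fun s : Fin k → ℝ => (ContinuousLinearMap.proj A : (Fin k → ℝ) →L[ℝ] ℝ) s) x :=
          ContinuousLinearMap.differentiableAt
            (ContinuousLinearMap.proj A : (Fin k → ℝ) →L[ℝ] ℝ)
        have hsub : fderiv ℝ (fun s : Fin k → ℝ => (ψ s).1 A - s A) x
            = fderiv ℝ (fun s : Fin k → ℝ => eT k n A (ψ s)) x
              - fderiv ℝ (fun s : Fin k → ℝ =>
                  (ContinuousLinearMap.proj A : (Fin k → ℝ) →L[ℝ] ℝ) s) x := by
          exact fderiv_sub hda hdb
        simp only [Pi.basisFun_apply, ContinuousLinearMap.coe_coe, LinearMap.zero_apply,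
          ContinuousLinearMap.coe_zero]
        rw [hsub]
        simp only [ContinuousLinearMap.coe_sub', Pi.sub_apply]
        rw [clm_comp_fderiv (eT k n A) (hdiff x), hint x B,
          (ContinuousLinearMap.proj A :
            (Fin k → ℝ) →L[ℝ] ℝ).fderiv]
        have := h1 B (ψ x) (hML x)
        simp [this]
    have := hconst t 0
    simp only [Pi.zero_apply] at this ⊢
    linarith [this]
  · -- part 2
    intro t i A
    have : pdR A (fun s => (ψ s).2.1 i) t
        = fderiv ℝ (fun s => eQ k n i (ψ s)) t (Pi.single A 1) := rfl
    rw [this, clm_comp_fderiv (eQ k n i) (hdiff t), hint t A]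
    have := h2 A (ψ t) (hML t) i
    simp [this]
  · -- part 3
    exact fun t i A => hML t i A
  · -- part 4
    intro t i
    have hsum : ∑ A, pdR A (fun s => pdv i A L (lagPr (ψ s))) t
        = ∑ A, (Z A (ψ t)).2.2.2 i A := by
      refine Finset.sum_congr rfl fun A _ => ?_
      have hfun : (fun s => pdv i A L (lagPr (ψ s))) = fun s => eP k n i A (ψ s) :=
        funext fun s => (hML s i A).symm
      rw [pdR, hfun, clm_comp_fderiv (eP k n i A) (hdiff t), hint t A, eP_apply]
    rw [hsum, h3 (ψ t) (hML t) i]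
end
end

section
/- Let L : ℝ^k × ℝ^n × ℝ^{nk} → ℝ be smooth and regular, let U be an open set on which the Legendre map FL is a diffeomorphism onto the open set FL(U), and let H : FL(U) → ℝ be the smooth function with H ∘ FL = E_L on U. Let ψ_L : V ⊆ ℝ^k → U be a smooth map, ψ_L(t) = (ψ^A(t), ψ^i(t), ψ^i_A(t)), satisfying ψ^A(t) = t^A + c^A for constants c^A, ψ^i_A(t) = ∂ψ^i/∂t^A(t), and Σ_{A=1}^k ∂/∂t^A[(∂L/∂v^i_A)(ψ_L(t))] = (∂L/∂q^i)(ψ_L(t)) for all i, t. Then ψ_H := FL ∘ ψ_L, written ψ_H(t) = (ψ^A(t), ψ^i(t), ψ^A_i(t)) with ψ^A_i(t) = (∂L/∂v^i_A)(ψ_L(t)), solves the Hamilton–De Donder–Weyl field equations for H: ∂H/∂p^A_i(ψ_H(t)) = ∂ψ^i/∂t^A(t) and ∂H/∂q^i(ψ_H(t)) = −Σ_{A=1}^k ∂ψ^A_i/∂t^A(t) for all i, A, t ∈ V. -/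
noncomputable section

/-- The Legendre map `FL(t, q, v) = (t, q, ∂L/∂v^i_A(t, q, v))`. -/
def FL {k n : ℕ} (L : Phase k n → ℝ) (p : Phase k n) : Phase k n :=
  (p.1, p.2.1, fun i A => pdv i A L p)

/-- The energy `E_L = Σ_{A,i} v^i_A ∂L/∂v^i_A − L`. -/
def energy {k n : ℕ} (L : Phase k n → ℝ) (p : Phase k n) : ℝ :=
  (∑ A, ∑ i, p.2.2 i A * pdv i A L p) - L p

set_option maxHeartbeats 1000000

section Aux
open ContinuousLinearMap

lemma contDiff_pdv {k n : ℕ} {L : Phase k n → ℝ} (hL : ContDiff ℝ (⊤ : ℕ∞) L)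
    (i : Fin n) (A : Fin k) : ContDiff ℝ (⊤ : ℕ∞) (pdv i A L) :=
  (hL.fderiv_right (by simp)).clm_apply contDiff_const

variable {k n : ℕ} {L : Phase k n → ℝ}

def DFL (L : Phase k n → ℝ) (p : Phase k n) : Phase k n →L[ℝ] Phase k n :=
  (fst ℝ (Fin k → ℝ) ((Fin n → ℝ) × (Fin n → Fin k → ℝ))).prod
    ((((fst ℝ (Fin n → ℝ) (Fin n → Fin k → ℝ))).comp
        (snd ℝ (Fin k → ℝ) ((Fin n → ℝ) × (Fin n → Fin k → ℝ)))).prod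
      (pi fun i => pi fun A => fderiv ℝ (pdv i A L) p))

lemma hasFDerivAt_FL (hL : ContDiff ℝ (⊤ : ℕ∞) L) (p : Phase k n) :
    HasFDerivAt (FL L) (DFL L p) p := by
  apply HasFDerivAt.prodMk
    ((fst ℝ (Fin k → ℝ) ((Fin n → ℝ) × (Fin n → Fin k → ℝ))).hasFDerivAt)
  apply HasFDerivAt.prodMk
  · exact (((fst ℝ (Fin n → ℝ) (Fin n → Fin k → ℝ))).comp
      (snd ℝ (Fin k → ℝ) ((Fin n → ℝ) × (Fin n → Fin k → ℝ)))).hasFDerivAt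
  · rw [hasFDerivAt_pi]
    intro i
    rw [hasFDerivAt_pi]
    intro A
    exact ((contDiff_pdv hL i A).differentiable (by simp) p).hasFDerivAt

lemma DFL_apply (p δ : Phase k n) :
    DFL L p δ = (δ.1, δ.2.1, fun i A => fderiv ℝ (pdv i A L) p δ) := rfl

def coordV (k n : ℕ) (i : Fin n) (A : Fin k) : Phase k n →L[ℝ] ℝ :=
  ((proj A : (Fin k → ℝ) →L[ℝ] ℝ)).comp
    (((proj i : (Fin n → Fin k → ℝ) →L[ℝ] (Fin k → ℝ))).comp
      (((snd ℝ (Fin n → ℝ) (Fin n → Fin k → ℝ))).comp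
        (snd ℝ (Fin k → ℝ) ((Fin n → ℝ) × (Fin n → Fin k → ℝ)))))

lemma hasFDerivAt_energy (hL : ContDiff ℝ (⊤ : ℕ∞) L) (p : Phase k n) :
    HasFDerivAt (energy L)
      ((∑ A, ∑ i, (p.2.2 i A • fderiv ℝ (pdv i A L) p + pdv i A L p • coordV k n i A))
        - fderiv ℝ L p) p := by
  apply HasFDerivAt.sub _ ((hL.differentiable (by simp) p).hasFDerivAt)
  apply HasFDerivAt.fun_sum
  intro A _
  apply HasFDerivAt.fun_sum
  intro i _
  exact ((coordV k n i A).hasFDerivAt).mul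
    ((contDiff_pdv hL i A).differentiable (by simp) p).hasFDerivAt

lemma chain (hL : ContDiff ℝ (⊤ : ℕ∞) L) {U : Set (Phase k n)} (hU : IsOpen U)
    (hFLU : IsOpen (FL L '' U)) {H : Phase k n → ℝ}
    (hH : ContDiffOn ℝ (⊤ : ℕ∞) H (FL L '' U))
    (hHL : ∀ p ∈ U, H (FL L p) = energy L p)
    {p : Phase k n} (hp : p ∈ U) (δ : Phase k n) :
    fderiv ℝ H (FL L p) (δ.1, δ.2.1, fun i A => fderiv ℝ (pdv i A L) p δ)
      = (∑ A, ∑ i, (p.2.2 i A * fderiv ℝ (pdv i A L) p δ + pdv i A L p * δ.2.2 i A))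
        - fderiv ℝ L p δ := by
  have hHd : DifferentiableAt ℝ H (FL L p) :=
    (hH.contDiffAt (hFLU.mem_nhds ⟨p, hp, rfl⟩)).differentiableAt (by simp)
  have hcomp : HasFDerivAt (fun q => H (FL L q)) ((fderiv ℝ H (FL L p)).comp (DFL L p)) p :=
    hHd.hasFDerivAt.comp p (hasFDerivAt_FL hL p)
  have heq : energy L =ᶠ[nhds p] (fun q => H (FL L q)) :=
    Filter.eventuallyEq_of_mem (hU.mem_nhds hp) (fun q hq => (hHL q hq).symm)
  have hE : HasFDerivAt (energy L) ((fderiv ℝ H (FL L p)).comp (DFL L p)) p :=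
    hcomp.congr_of_eventuallyEq heq
  have huniq := (hasFDerivAt_energy hL p).unique hE
  have h2 := congrArg (fun (T : Phase k n →L[ℝ] ℝ) => T δ) huniq
  simp only [ContinuousLinearMap.sub_apply, ContinuousLinearMap.sum_apply,
    ContinuousLinearMap.add_apply, ContinuousLinearMap.smul_apply, smul_eq_mul,
    ContinuousLinearMap.coe_comp', Function.comp_apply] at h2
  rw [DFL_apply] at h2
  have hcoord : ∀ (i : Fin n) (A : Fin k), coordV k n i A δ = δ.2.2 i A := fun _ _ => rfl
  simp only [hcoord] at h2
  linarith [h2]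

lemma single_expand (w : Fin n → Fin k → ℝ) :
    ∑ i, ∑ A, w i A • (Pi.single i ((Pi.single A (1:ℝ)) : Fin k → ℝ) : Fin n → Fin k → ℝ) = w := by
  funext j B
  simp [Pi.single_apply, apply_ite (fun f : Fin k → ℝ => f B)]

lemma clm_lin (T : Phase k n →L[ℝ] ℝ) (w : Fin n → Fin k → ℝ) :
    T (0, 0, w) = ∑ i, ∑ A, w i A * T (0, 0, Pi.single i (Pi.single A 1)) := by
  have hJ : ∀ v : Fin n → Fin k → ℝ,
      ((0, 0, v) : Phase k n) =
        (ContinuousLinearMap.inr ℝ (Fin k → ℝ) ((Fin n → ℝ) × (Fin n → Fin k → ℝ))).comp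
          (ContinuousLinearMap.inr ℝ (Fin n → ℝ) (Fin n → Fin k → ℝ)) v := fun v => rfl
  rw [hJ, ← single_expand w]
  simp only [map_sum, map_smul, smul_eq_mul]
  refine Finset.sum_congr rfl fun i _ => Finset.sum_congr rfl fun A _ => ?_
  rw [single_expand w, hJ]

lemma pdv_H (hL : ContDiff ℝ (⊤ : ℕ∞) L) (hreg : Regular L) {U : Set (Phase k n)}
    (hU : IsOpen U) (hFLU : IsOpen (FL L '' U)) {H : Phase k n → ℝ}
    (hH : ContDiffOn ℝ (⊤ : ℕ∞) H (FL L '' U))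
    (hHL : ∀ p ∈ U, H (FL L p) = energy L p)
    {p : Phase k n} (hp : p ∈ U) :
    ∀ (i : Fin n) (A : Fin k), pdv i A H (FL L p) = p.2.2 i A := by
  classical
  set T := fderiv ℝ H (FL L p) with hT
  set x : Fin n × Fin k → ℝ :=
    fun a => T (0, 0, (Pi.single a.1 ((Pi.single a.2 (1:ℝ)) : Fin k → ℝ) : Fin n → Fin k → ℝ)) with hx
  set y : Fin n × Fin k → ℝ := fun a => p.2.2 a.1 a.2 with hy
  have hMV : (hessV L p).mulVec x = (hessV L p).mulVec y := by
    funext a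
    obtain ⟨j, B⟩ := a
    have hchain := chain hL hU hFLU hH hHL hp (0, 0, Pi.single j (Pi.single B 1))
    have hlhs : fderiv ℝ H (FL L p)
        (((0 : Fin k → ℝ), (0 : Fin n → ℝ),
            (Pi.single j ((Pi.single B (1:ℝ)) : Fin k → ℝ) : Fin n → Fin k → ℝ)).1,
          ((0 : Fin k → ℝ), (0 : Fin n → ℝ),
            (Pi.single j ((Pi.single B (1:ℝ)) : Fin k → ℝ) : Fin n → Fin k → ℝ)).2.1,
          fun i A => fderiv ℝ (pdv i A L) p (0, 0, Pi.single j (Pi.single B 1)))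
        = ∑ i, ∑ A, hessV L p (j, B) (i, A) * x (i, A) := clm_lin T _
    have hcancel : ∑ A, ∑ i, pdv i A L p *
        ((0, 0, Pi.single j (Pi.single B 1)) : Phase k n).2.2 i A
        = fderiv ℝ L p (0, 0, Pi.single j (Pi.single B 1)) := by
      have h0 : fderiv ℝ L p (0, 0, Pi.single j (Pi.single B 1)) = pdv j B L p := rfl
      rw [h0, Finset.sum_comm]
      simp [Pi.single_apply, ite_apply]
    rw [hlhs] at hchain
    simp only [Finset.sum_add_distrib] at hchain
    rw [hcancel, add_sub_cancel_right] at hchain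
    show (hessV L p).mulVec x (j, B) = (hessV L p).mulVec y (j, B)
    simp only [Matrix.mulVec, dotProduct, Fintype.sum_prod_type]
    rw [hchain, Finset.sum_comm]
    exact Finset.sum_congr rfl fun i _ => Finset.sum_congr rfl fun A _ => mul_comm _ _
  obtain ⟨u, hu⟩ := hreg p
  have hxy : x = y := by
    have h1 := congrArg (fun v => (↑u⁻¹ : Matrix (Fin n × Fin k) (Fin n × Fin k) ℝ).mulVec v) hMV
    simp only [Matrix.mulVec_mulVec, ← hu, Units.inv_mul, Matrix.one_mulVec] at h1
    exact h1
  intro i A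
  exact congrFun hxy (i, A)

lemma pdq_H (hL : ContDiff ℝ (⊤ : ℕ∞) L) (hreg : Regular L) {U : Set (Phase k n)}
    (hU : IsOpen U) (hFLU : IsOpen (FL L '' U)) {H : Phase k n → ℝ}
    (hH : ContDiffOn ℝ (⊤ : ℕ∞) H (FL L '' U))
    (hHL : ∀ p ∈ U, H (FL L p) = energy L p)
    {p : Phase k n} (hp : p ∈ U) (j : Fin n) :
    pdq j H (FL L p) = - pdq j L p := by
  have hA := pdv_H hL hreg hU hFLU hH hHL hp
  have hchain := chain hL hU hFLU hH hHL hp (0, Pi.single j 1, 0)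
  set T := fderiv ℝ H (FL L p) with hT
  set w : Fin n → Fin k → ℝ := fun i A => fderiv ℝ (pdv i A L) p (0, Pi.single j 1, 0) with hw
  have hchain' : T ((0 : Fin k → ℝ), (Pi.single j (1:ℝ) : Fin n → ℝ), w)
      = ∑ A, ∑ i, (p.2.2 i A * w i A + pdv i A L p * (0:ℝ)) - pdq j L p := hchain
  have hadd : ((0 : Fin k → ℝ), (Pi.single j (1:ℝ) : Fin n → ℝ), (0 : Fin n → Fin k → ℝ))
      + ((0 : Fin k → ℝ), (0 : Fin n → ℝ), w)
      = ((0 : Fin k → ℝ), (Pi.single j (1:ℝ) : Fin n → ℝ), w) := by simp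
  rw [← hadd, map_add, clm_lin T w] at hchain'
  have hA' : ∀ (i : Fin n) (A : Fin k),
      T (0, 0, (Pi.single i ((Pi.single A (1:ℝ)) : Fin k → ℝ) : Fin n → Fin k → ℝ))
        = p.2.2 i A := hA
  simp only [hA'] at hchain'
  have hsum : ∑ A, ∑ i, (p.2.2 i A * w i A + pdv i A L p * (0:ℝ))
      = ∑ i, ∑ A, w i A * p.2.2 i A := by
    rw [Finset.sum_comm]
    exact Finset.sum_congr rfl fun i _ => Finset.sum_congr rfl fun A _ => by ring
  rw [hsum] at hchain'
  have hTq : pdq j H (FL L p) = T (0, Pi.single j 1, 0) := rfl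
  rw [hTq]
  linarith [hchain']

end Aux

/-- under the setup of Statement 9, if `ψ_L : V → U` satisfies
`ψ^A(t) = t^A + c^A`, `ψ^i_A = ∂ψ^i/∂t^A` and the Euler–Lagrange equations, then
`ψ_H = FL ∘ ψ_L` solves the Hamilton–De Donder–Weyl field equations for `H`. -/
theorem stmt10 {k n : ℕ} (L : Phase k n → ℝ) (hL : ContDiff ℝ (⊤ : ℕ∞) L)
    (hreg : Regular L)
    (U : Set (Phase k n)) (hU : IsOpen U) (hFLU : IsOpen (FL L '' U))
    (G : Phase k n → Phase k n) (hG : ContDiffOn ℝ (⊤ : ℕ∞) G (FL L '' U))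
    (hGl : ∀ p ∈ U, G (FL L p) = p) (hGr : ∀ q ∈ FL L '' U, FL L (G q) = q)
    (H : Phase k n → ℝ) (hH : ContDiffOn ℝ (⊤ : ℕ∞) H (FL L '' U))
    (hHL : ∀ p ∈ U, H (FL L p) = energy L p)
    (V : Set (Fin k → ℝ)) (hV : IsOpen V)
    (ψL : (Fin k → ℝ) → Phase k n) (hψL : ContDiffOn ℝ (⊤ : ℕ∞) ψL V)
    (hψU : ∀ t ∈ V, ψL t ∈ U)
    (c : Fin k → ℝ) (hc : ∀ t ∈ V, ∀ A, (ψL t).1 A = t A + c A)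
    (hvel : ∀ t ∈ V, ∀ (i : Fin n) (A : Fin k),
      (ψL t).2.2 i A = pdR A (fun s => (ψL s).2.1 i) t)
    (hEL : ∀ t ∈ V, ∀ i : Fin n,
      ∑ A, pdR A (fun s => pdv i A L (ψL s)) t = pdq i L (ψL t)) :
    ∀ t ∈ V, (∀ (i : Fin n) (A : Fin k),
        pdv i A H (FL L (ψL t)) = pdR A (fun s => (ψL s).2.1 i) t) ∧
      (∀ i : Fin n,
        pdq i H (FL L (ψL t)) = - ∑ A, pdR A (fun s => pdv i A L (ψL s)) t) := by
  intro t ht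
  refine ⟨fun i A => ?_, fun i => ?_⟩
  · exact (pdv_H hL hreg hU hFLU hH hHL (hψU t ht) i A).trans (hvel t ht i A)
  · exact (pdq_H hL hreg hU hFLU hH hHL (hψU t ht) i).trans (by rw [← hEL t ht i])
end
end

section
/- Let L : ℝ^k × ℝ^n × ℝ^{nk} → ℝ be smooth, let X = (X_1, …, X_k) be a SOPDE with coefficient functions (X_A)^i_B, and let ψ_L : ℝ^k → ℝ^k × ℝ^n × ℝ^{nk} be an integral section of X. Define ψ^B_j(t) = (∂L/∂v^j_B)(ψ_L(t)). Then for all A, B, j and all t: ∂ψ^B_j/∂t^A(t) = [∂²L/∂t^A∂v^j_B + Σ_i v^i_A · ∂²L/∂q^i∂v^j_B + Σ_{i,C} (X_A)^i_C · ∂²L/∂v^i_C∂v^j_B](ψ_L(t)); consequently ψ = (ψ_L, FL ∘ ψ_L) is an integral section of the k-vector field on the unified space whose (t, q, v)-components agree with those of X_A and whose p-components are the bracketed expressions. -/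
noncomputable section

lemma clm_decomp {k n : ℕ} (D : Phase k n →L[ℝ] ℝ)
    (u : Fin k → ℝ) (v : Fin n → ℝ) (w : Fin n → Fin k → ℝ) :
    D (u, v, w) = D (u, 0, 0) + ∑ i, v i * D (0, Pi.single i 1, 0)
      + ∑ C, ∑ i, w i C * D (0, 0, Pi.single i (Pi.single C 1)) := by
  have hv : ((0, v, 0) : Phase k n) = ∑ i, v i • ((0, Pi.single i 1, 0) : Phase k n) := by
    refine Prod.ext ?_ (Prod.ext ?_ ?_)
    · funext a
      simp [Prod.fst_sum, Prod.snd_sum, Finset.sum_apply, Pi.single_apply]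
    · funext a
      simp [Prod.fst_sum, Prod.snd_sum, Finset.sum_apply, Pi.single_apply]
    · funext a b
      simp [Prod.fst_sum, Prod.snd_sum, Finset.sum_apply, Pi.single_apply]
  have hw : ((0, 0, w) : Phase k n)
      = ∑ C, ∑ i, w i C • ((0, 0, Pi.single i (Pi.single C 1)) : Phase k n) := by
    refine Prod.ext ?_ (Prod.ext ?_ ?_)
    · funext a
      simp [Prod.fst_sum, Prod.snd_sum, Finset.sum_apply, Pi.single_apply]
    · funext a
      simp [Prod.fst_sum, Prod.snd_sum, Finset.sum_apply, Pi.single_apply]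
    · funext a b
      simp [Prod.fst_sum, Prod.snd_sum, Finset.sum_apply, Pi.single_apply]
  have hsplit : ((u, v, w) : Phase k n) = (u, 0, 0) + (0, v, 0) + (0, 0, w) := by
    simp [Prod.ext_iff]
  rw [hsplit, map_add, map_add, hv, hw]
  simp only [map_sum, map_smul, smul_eq_mul]

/-- for any integral section `ψ_L` of a SOPDE `X`, the momenta
`ψ^B_j = (∂L/∂v^j_B) ∘ ψ_L` satisfy
`∂ψ^B_j/∂t^A = ∂²L/∂t^A∂v^j_B + Σ_i v^i_A ∂²L/∂q^i∂v^j_B + Σ_{i,C} (X_A)^i_C ∂²L/∂v^i_C∂v^j_B`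
along `ψ_L`; consequently `(ψ_L, FL ∘ ψ_L)` is an integral section of the `k`-vector field
on the unified space whose `(t,q,v)`-components agree with those of `X_A` and whose
`p`-components are the bracketed expressions. -/
theorem stmt11 {k n : ℕ} (L : Phase k n → ℝ) (hL : ContDiff ℝ (⊤ : ℕ∞) L)
    (X : Fin k → Phase k n → Phase k n) (hX : ∀ A, ContDiff ℝ (⊤ : ℕ∞) (X A))
    (hS : IsSOPDE X)
    (ψL : (Fin k → ℝ) → Phase k n) (hψL : ContDiff ℝ (⊤ : ℕ∞) ψL)
    (hint : IsIntegralSection X ψL) :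
    (∀ t (j : Fin n) (A B : Fin k),
        pdR A (fun s => pdv j B L (ψL s)) t
          = pdt A (pdv j B L) (ψL t)
            + ∑ i, (ψL t).2.2 i A * pdq i (pdv j B L) (ψL t)
            + ∑ C, ∑ i, (X A (ψL t)).2.2 i C * pdv i C (pdv j B L) (ψL t)) ∧
    IsIntegralSectionU
      (fun A m =>
        ((X A (lagPr m)).1, (X A (lagPr m)).2.1, (X A (lagPr m)).2.2,
          fun j B =>
            pdt A (pdv j B L) (lagPr m)
              + ∑ i, (lagPr m).2.2 i A * pdq i (pdv j B L) (lagPr m)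
              + ∑ C, ∑ i, (X A (lagPr m)).2.2 i C * pdv i C (pdv j B L) (lagPr m)))
      (fun t => ((ψL t).1, (ψL t).2.1, (ψL t).2.2, fun j B => pdv j B L (ψL t))) := by
  have hψd : Differentiable ℝ ψL := hψL.differentiable (by simp)
  have hgd : ∀ (j : Fin n) (B : Fin k), Differentiable ℝ (pdv j B L) := by
    intro j B
    have : ContDiff ℝ (⊤ : ℕ∞) fun p => fderiv ℝ L p (0, 0, Pi.single j (Pi.single B 1)) :=
      (hL.fderiv_right (by simp)).clm_apply contDiff_const
    exact this.differentiable (by simp)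
  have hcd : ∀ (j : Fin n) (B : Fin k), Differentiable ℝ (fun s => pdv j B L (ψL s)) :=
    fun j B => (hgd j B).comp hψd
  have part1 : ∀ t (j : Fin n) (A B : Fin k),
      pdR A (fun s => pdv j B L (ψL s)) t
        = pdt A (pdv j B L) (ψL t)
          + ∑ i, (ψL t).2.2 i A * pdq i (pdv j B L) (ψL t)
          + ∑ C, ∑ i, (X A (ψL t)).2.2 i C * pdv i C (pdv j B L) (ψL t) := by
    intro t j A B
    have hchain : fderiv ℝ (fun s => pdv j B L (ψL s)) t
        = (fderiv ℝ (pdv j B L) (ψL t)).comp (fderiv ℝ ψL t) :=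
      fderiv_comp (x := t) ((hgd j B) (ψL t)) (hψd t)
    have h0 : pdR A (fun s => pdv j B L (ψL s)) t
        = fderiv ℝ (pdv j B L) (ψL t) (X A (ψL t)) := by
      rw [pdR, hchain]
      simp [hint t A]
    obtain ⟨h1, h2⟩ := hS A (ψL t)
    calc pdR A (fun s => pdv j B L (ψL s)) t
        = fderiv ℝ (pdv j B L) (ψL t) (X A (ψL t)) := h0
      _ = fderiv ℝ (pdv j B L) (ψL t)
            ((X A (ψL t)).1, (X A (ψL t)).2.1, (X A (ψL t)).2.2) := rfl
      _ = fderiv ℝ (pdv j B L) (ψL t) ((X A (ψL t)).1, 0, 0)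
            + ∑ i, (X A (ψL t)).2.1 i * fderiv ℝ (pdv j B L) (ψL t) (0, Pi.single i 1, 0)
            + ∑ C, ∑ i, (X A (ψL t)).2.2 i C *
                fderiv ℝ (pdv j B L) (ψL t) (0, 0, Pi.single i (Pi.single C 1)) :=
          clm_decomp _ _ _ _
      _ = _ := by rw [h1]; simp only [h2]; rfl
  refine ⟨part1, ?_⟩
  intro t A
  have hψt : HasFDerivAt ψL (fderiv ℝ ψL t) t := (hψd t).hasFDerivAt
  have hmom : HasFDerivAt (fun s => (fun (j : Fin n) (B : Fin k) => pdv j B L (ψL s)))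
      (ContinuousLinearMap.pi fun j => ContinuousLinearMap.pi fun B =>
        fderiv ℝ (fun s => pdv j B L (ψL s)) t) t := by
    refine hasFDerivAt_pi.2 fun j => hasFDerivAt_pi.2 fun B => ?_
    exact ((hcd j B) t).hasFDerivAt
  have hfull := HasFDerivAt.prodMk (hψt.fst) (HasFDerivAt.prodMk (hψt.snd.fst) (HasFDerivAt.prodMk (hψt.snd.snd) hmom))
  have heq := hfull.fderiv
  show fderiv ℝ (fun t => ((ψL t).1, (ψL t).2.1, (ψL t).2.2,
      fun j B => pdv j B L (ψL t))) t (Pi.single A 1) = _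
  rw [heq]
  have hDe : fderiv ℝ ψL t (Pi.single A 1) = X A (ψL t) := hint t A
  refine Prod.ext ?_ (Prod.ext ?_ (Prod.ext ?_ ?_))
  · simp [hDe, lagPr]
  · simp [hDe, lagPr]
  · simp [hDe, lagPr]
  · funext j B
    simp only [ContinuousLinearMap.prod_apply, ContinuousLinearMap.pi_apply]
    exact part1 t j A B
end
end

section
/- Let L : ℝ^k × ℝ^n × ℝ^{nk} → ℝ be smooth and regular, let U be an open set on which the Legendre map FL is a diffeomorphism onto the open set FL(U), and let H : FL(U) → ℝ be the smooth function with H ∘ FL = E_L on U. Let X = (X_1, …, X_k) be a SOPDE on U with coefficients (X_A)^i_B satisfying at every point of U: Σ_B ∂²L/∂t^B∂v^i_B + Σ_{B,j} v^j_B · ∂²L/∂q^j∂v^i_B + Σ_{B,C,j} (X_B)^j_C · ∂²L/∂v^j_C∂v^i_B = ∂L/∂q^i. Define on FL(U) the pushforward k-vector field X_H with components ((X_H)_A)^B ∘ FL = δ^B_A, ((X_H)_A)^i ∘ FL = v^i_A, and ((X_H)_A)^B_j ∘ FL = ∂²L/∂t^A∂v^j_B + Σ_i v^i_A · ∂²L/∂q^i∂v^j_B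 + Σ_{i,C} (X_A)^i_C · ∂²L/∂v^i_C∂v^j_B. Then X_H satisfies the Hamilton component equations on FL(U): ((X_H)_A)^i = ∂H/∂p^A_i and Σ_{A=1}^k ((X_H)_A)^A_i = −∂H/∂q^i. -/
noncomputable section

namespace Stmt13Aux

variable {k n : ℕ}

/-- Basis vector in the third factor. -/
def ev (i : Fin n) (A : Fin k) : Phase k n := (0, 0, Pi.single i (Pi.single A 1))

/-- The coordinate `p ↦ p.2.2 i A` as a continuous linear map. -/
def coord (i : Fin n) (A : Fin k) : Phase k n →L[ℝ] ℝ :=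
  (ContinuousLinearMap.proj A).comp ((ContinuousLinearMap.proj i).comp
    ((ContinuousLinearMap.snd ℝ (Fin n → ℝ) (Fin n → Fin k → ℝ)).comp
      (ContinuousLinearMap.snd ℝ (Fin k → ℝ) ((Fin n → ℝ) × (Fin n → Fin k → ℝ)))))

@[simp] lemma coord_apply (i : Fin n) (A : Fin k) (w : Phase k n) :
    coord i A w = w.2.2 i A := rfl

lemma sum_single_smul (M : Fin n → Fin k → ℝ) :
    ∑ j, ∑ B, M j B • (ev j B : Phase k n) = ((0, 0, M) : Phase k n) := by
  refine Prod.ext ?_ (Prod.ext ?_ ?_)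
  · simp [ev, Prod.fst_sum]
  · simp [ev, Prod.fst_sum, Prod.snd_sum]
  · simp only [Prod.snd_sum, ev, Prod.smul_mk]
    funext j' B'
    simp [Finset.sum_apply, Pi.single_apply, ite_apply, Finset.sum_ite_eq]

lemma clm_third (T : Phase k n →L[ℝ] ℝ) (M : Fin n → Fin k → ℝ) :
    T ((0, 0, M) : Phase k n) = ∑ j, ∑ B, M j B * T (ev j B) := by
  rw [← sum_single_smul M, map_sum]
  simp [map_sum, map_smul]

lemma clm_split (T : Phase k n →L[ℝ] ℝ) (b : Fin n → ℝ) (M : Fin n → Fin k → ℝ) :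
    T ((0, b, M) : Phase k n) = T (0, b, 0) + ∑ j, ∑ B, M j B * T (ev j B) := by
  have h : ((0, b, M) : Phase k n) = (0, b, 0) + (0, 0, M) := by
    refine Prod.ext ?_ (Prod.ext ?_ ?_) <;> simp
  rw [h, map_add, clm_third]

lemma mulVec_eq_zero {u : Fin n × Fin k → ℝ} {M : Matrix (Fin n × Fin k) (Fin n × Fin k) ℝ}
    (hM : IsUnit M) (h : M.mulVec u = 0) : u = 0 :=
  (Matrix.mulVec_injective_iff_isUnit.mpr hM) (by rw [h, Matrix.mulVec_zero])

lemma delta_sum (c : Fin n → Fin k → ℝ) (j : Fin n) (B : Fin k) :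
    ∑ A, ∑ i, c i A * (Pi.single j (Pi.single B 1) : Fin n → Fin k → ℝ) i A = c j B := by
  simp [Pi.single_apply, ite_apply, Finset.sum_ite_eq]

lemma sum_swap_mul {α β : Type*} [Fintype α] [Fintype β] (c d : α → β → ℝ) :
    ∑ a, ∑ b, c a b * d a b = ∑ b, ∑ a, d a b * c a b := by
  rw [Finset.sum_comm]
  exact Finset.sum_congr rfl fun _ _ => Finset.sum_congr rfl fun _ _ => mul_comm _ _

end Stmt13Aux

open Stmt13Aux in
set_option maxHeartbeats 2000000 in
/-- the pushforward under the Legendre map of a SOPDE solution of the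
Lagrangian component equations satisfies the Hamilton component equations on `FL(U)`. -/
theorem stmt13 {k n : ℕ} (L : Phase k n → ℝ) (hL : ContDiff ℝ (⊤ : ℕ∞) L)
    (hreg : Regular L)
    (U : Set (Phase k n)) (hU : IsOpen U) (hFLU : IsOpen (FL L '' U))
    (G : Phase k n → Phase k n) (hG : ContDiffOn ℝ (⊤ : ℕ∞) G (FL L '' U))
    (hGl : ∀ p ∈ U, G (FL L p) = p) (hGr : ∀ q ∈ FL L '' U, FL L (G q) = q)
    (H : Phase k n → ℝ) (hH : ContDiffOn ℝ (⊤ : ℕ∞) H (FL L '' U))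
    (hHL : ∀ p ∈ U, H (FL L p) = energy L p)
    -- `X` is a SOPDE on `U` …
    (X : Fin k → Phase k n → Phase k n) (hX : ∀ A, ContDiff ℝ (⊤ : ℕ∞) (X A))
    (hXt : ∀ A, ∀ p ∈ U, (X A p).1 = Pi.single A 1)
    (hXq : ∀ A, ∀ p ∈ U, ∀ i : Fin n, (X A p).2.1 i = p.2.2 i A)
    -- … whose coefficients satisfy the Lagrangian component equations on `U`:
    (hXEL : ∀ p ∈ U, ∀ i : Fin n,
      (∑ B, pdt B (pdv i B L) p)
        + (∑ B, ∑ j, p.2.2 j B * pdq j (pdv i B L) p)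
        + (∑ B, ∑ C, ∑ j, (X B p).2.2 j C * pdv j C (pdv i B L) p)
      = pdq i L p)
    -- the pushforward `k`-vector field `X_H` on `FL(U)`:
    (XH : Fin k → Phase k n → Phase k n) (hXH : ∀ A, ContDiff ℝ (⊤ : ℕ∞) (XH A))
    (hXHt : ∀ A, ∀ p ∈ U, (XH A (FL L p)).1 = Pi.single A 1)
    (hXHq : ∀ A, ∀ p ∈ U, ∀ i : Fin n, (XH A (FL L p)).2.1 i = p.2.2 i A)
    (hXHp : ∀ A, ∀ p ∈ U, ∀ (j : Fin n) (B : Fin k),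
      (XH A (FL L p)).2.2 j B
        = pdt A (pdv j B L) p
          + ∑ i, p.2.2 i A * pdq i (pdv j B L) p
          + ∑ C, ∑ i, (X A p).2.2 i C * pdv i C (pdv j B L) p) :
    ∀ q ∈ FL L '' U,
      (∀ (A : Fin k) (i : Fin n), (XH A q).2.1 i = pdv i A H q) ∧
      (∀ i : Fin n, ∑ A, (XH A q).2.2 i A = - pdq i H q) := by
  rintro q ⟨p, hp, rfl⟩
  -- setup: derivatives of L
  have hF : ContDiff ℝ (⊤ : ℕ∞) (fderiv ℝ L) := hL.fderiv_right (by exact_mod_cast le_top)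
  set F : Phase k n → (Phase k n →L[ℝ] ℝ) := fderiv ℝ L with hFdef
  have hFd : ∀ x, HasFDerivAt F (fderiv ℝ F x) x :=
    fun x => (hF.differentiable (by simp) x).hasFDerivAt
  set D2 : Phase k n →L[ℝ] (Phase k n →L[ℝ] ℝ) := fderiv ℝ F p with hD2def
  have hFv : ∀ (v : Phase k n), HasFDerivAt (fun y => F y v)
      ((ContinuousLinearMap.apply ℝ ℝ v).comp D2) p :=
    fun v => (ContinuousLinearMap.apply ℝ ℝ v).hasFDerivAt.comp p (hFd p)
  have hsec : ∀ (v w : Phase k n), D2 w v = fderiv ℝ (fun y => F y v) p w := by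
    intro v w
    rw [(hFv v).fderiv]
    rfl
  -- second-derivative identifications
  have hsecv : ∀ (j i' : Fin n) (B A' : Fin k),
      D2 (ev j B) (ev i' A') = pdv j B (pdv i' A' L) p := fun _ _ _ _ => hsec _ _
  have hsecq : ∀ (i j : Fin n) (B : Fin k),
      D2 ((0, Pi.single i 1, 0) : Phase k n) (ev j B) = pdq i (pdv j B L) p :=
    fun _ _ _ => hsec _ _
  -- values of the derivatives of H and L on basis vectors
  have hHev : ∀ (i : Fin n) (A : Fin k),
      fderiv ℝ H (FL L p) (ev i A) = pdv i A H (FL L p) := fun _ _ => rfl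
  have hHq : ∀ (i : Fin n),
      fderiv ℝ H (FL L p) ((0, Pi.single i 1, 0) : Phase k n) = pdq i H (FL L p) :=
    fun _ => rfl
  have hLev : ∀ (i : Fin n) (A : Fin k), F p (ev i A) = pdv i A L p := fun _ _ => rfl
  have hLq : ∀ (i : Fin n), F p ((0, Pi.single i 1, 0) : Phase k n) = pdq i L p :=
    fun _ => rfl
  have hev22 : ∀ (j i : Fin n) (B A : Fin k),
      (ev j B).2.2 i A = (Pi.single j (Pi.single B 1) : Fin n → Fin k → ℝ) i A := fun _ _ _ _ => rfl
  -- derivative of FL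
  set DFL : Phase k n →L[ℝ] Phase k n :=
    (ContinuousLinearMap.fst ℝ (Fin k → ℝ) ((Fin n → ℝ) × (Fin n → Fin k → ℝ))).prod
      (((ContinuousLinearMap.fst ℝ (Fin n → ℝ) (Fin n → Fin k → ℝ)).comp
          (ContinuousLinearMap.snd ℝ (Fin k → ℝ) ((Fin n → ℝ) × (Fin n → Fin k → ℝ)))).prod
        (ContinuousLinearMap.pi fun i => ContinuousLinearMap.pi fun A =>
          (ContinuousLinearMap.apply ℝ ℝ (ev i A)).comp D2)) with hDFLdef
  have hFL : HasFDerivAt (FL L) DFL p := by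
    refine HasFDerivAt.prodMk hasFDerivAt_fst (HasFDerivAt.prodMk ?_ ?_)
    · exact hasFDerivAt_fst.comp p hasFDerivAt_snd
    · exact hasFDerivAt_pi'' fun i => hasFDerivAt_pi'' fun A => hFv (ev i A)
  -- derivative of the energy
  set DE : Phase k n →L[ℝ] ℝ :=
    (∑ A, ∑ i, (p.2.2 i A • ((ContinuousLinearMap.apply ℝ ℝ (ev i A)).comp D2)
        + (F p (ev i A)) • coord i A)) - fderiv ℝ L p with hDEdef
  have hE : HasFDerivAt (energy L) DE p := by
    refine HasFDerivAt.sub ?_ (hL.differentiable (by simp) p).hasFDerivAt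
    exact HasFDerivAt.fun_sum fun A _ => HasFDerivAt.fun_sum fun i _ =>
      (coord i A).hasFDerivAt.mul (hFv (ev i A))
  have hDEapp : ∀ w : Phase k n,
      DE w = (∑ A, ∑ i, (p.2.2 i A * D2 w (ev i A) + F p (ev i A) * w.2.2 i A))
        - F p w := by
    intro w
    simp [hDEdef, ContinuousLinearMap.sum_apply, smul_eq_mul, hFdef]
  -- chain rule : the derivative of H ∘ FL equals that of the energy
  have hHd : HasFDerivAt H (fderiv ℝ H (FL L p)) (FL L p) :=
    ((hH.contDiffAt (hFLU.mem_nhds ⟨p, hp, rfl⟩)).differentiableAt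
      (by simp)).hasFDerivAt
  have hkey : ∀ w : Phase k n, fderiv ℝ H (FL L p) (DFL w) = DE w := by
    intro w
    have h1 : (fun x => H (FL L x)) =ᶠ[nhds p] energy L :=
      Filter.eventuallyEq_of_mem (hU.mem_nhds hp) hHL
    have hc := (hHd.comp p hFL).fderiv
    have hc' : fderiv ℝ (fun x => H (FL L x)) p = (fderiv ℝ H (FL L p)).comp DFL := hc
    rw [h1.fderiv_eq, hE.fderiv] at hc'
    rw [hc']
    rfl
  -- Step 1: ∂H/∂p^A_i ∘ FL = v^i_A
  have step1 : ∀ (i : Fin n) (A : Fin k), pdv i A H (FL L p) = p.2.2 i A := by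
    have hmv : (hessV L p).mulVec (fun x => pdv x.1 x.2 H (FL L p) - p.2.2 x.1 x.2) = 0 := by
      funext x
      obtain ⟨j, B⟩ := x
      have h : fderiv ℝ H (FL L p)
          ((0 : Fin k → ℝ), (0 : Fin n → ℝ), fun i' A' => D2 (ev j B) (ev i' A'))
          = DE (ev j B) := hkey (ev j B)
      rw [clm_third, hDEapp (ev j B)] at h
      simp only [hsecv, hHev, hLev, hev22, Finset.sum_add_distrib, delta_sum,
        add_sub_cancel_right] at h
      show ∑ x : Fin n × Fin k, hessV L p (j, B) x *
          (pdv x.1 x.2 H (FL L p) - p.2.2 x.1 x.2) = 0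
      rw [Fintype.sum_prod_type]
      simp only [hessV, Matrix.of_apply, mul_sub, Finset.sum_sub_distrib]
      rw [sub_eq_zero, h]
      exact sum_swap_mul _ _
    intro i A
    have h0 := congrFun (mulVec_eq_zero (hreg p) hmv) (i, A)
    have : pdv i A H (FL L p) - p.2.2 i A = 0 := h0
    linarith
  -- Step 2: ∂H/∂q^i ∘ FL = −∂L/∂q^i
  have step2 : ∀ i : Fin n, pdq i H (FL L p) = - pdq i L p := by
    intro i
    have h : fderiv ℝ H (FL L p)
        ((0 : Fin k → ℝ), Pi.single i 1,
          fun j' B' => D2 ((0 : Fin k → ℝ), Pi.single i 1, (0 : Fin n → Fin k → ℝ)) (ev j' B'))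
        = DE (0, Pi.single i 1, 0) := hkey ((0 : Fin k → ℝ), Pi.single i 1, (0 : Fin n → Fin k → ℝ))
    rw [clm_split, hDEapp] at h
    simp only [hsecq, hHev, hHq, hLev, hLq, step1, Pi.zero_apply, mul_zero,
      add_zero] at h
    have hs := sum_swap_mul (fun A i' => p.2.2 i' A) (fun A i' => pdq i (pdv i' A L) p)
    linarith [h, hs]
  refine ⟨fun A i => ?_, fun i => ?_⟩
  · rw [hXHq A p hp i, step1 i A]
  · have hsum : ∑ A, (XH A (FL L p)).2.2 i A = pdq i L p := by
      rw [Finset.sum_congr rfl (fun A _ => hXHp A p hp i A),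
        Finset.sum_add_distrib, Finset.sum_add_distrib]
      exact hXEL p hp i
    rw [hsum, step2 i, neg_neg]
end
end
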